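/- arXiv:2208.13927 — 2 statements merged into one kernel-verified Lean document; each statement's English description precedes it below -/
import Mathlib

section
/- Let n ≥ 2 and let K and L be compact convex subsets of ℝⁿ whose affine hulls each have dimension at least n−1. If ∫_{S^{n−1}} vol_{n−1}((K|u^⊥) △ (L|u^⊥)) dσ(u) = 0, then K = L. -/
open MeasureTheory Metric

/-- The rotation-invariant (uniform) probability measure on the unit sphere `S^{n-1} ⊂ ℝⁿ`,
realized as the normalized `(n-1)`-dimensional Hausdorff measure restricted to the sphere. -/
noncomputable def sphereMeasure (n : ℕ) : Measure (EuclideanSpace ℝ (Fin n)) :=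
  (μH[(n : ℝ) - 1] (sphere (0 : EuclideanSpace ℝ (Fin n)) 1))⁻¹ •
    (μH[(n : ℝ) - 1]).restrict (sphere (0 : EuclideanSpace ℝ (Fin n)) 1)

/-- Orthogonal projection of `x` onto the hyperplane `u^⊥`, viewed in the ambient space. -/
noncomputable def projHyperplane {n : ℕ} (u x : EuclideanSpace ℝ (Fin n)) :
    EuclideanSpace ℝ (Fin n) :=
  (Submodule.orthogonalProjectionOnto (ℝ ∙ u)ᗮ x : EuclideanSpace ℝ (Fin n))

open Module InnerProductSpace

variable {n : ℕ}
local notation "E" => EuclideanSpace ℝ (Fin n)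

lemma projH_eq (u x : E) (hu : ‖u‖ = 1) :
    projHyperplane u x = x - (⟪u, x⟫_ℝ) • u := by
  rw [projHyperplane, ← Submodule.starProjection_apply, Submodule.starProjection_orthogonal_val,
    Submodule.starProjection_singleton]
  rw [hu]; norm_num

lemma projH_mem (u x : E) : projHyperplane u x ∈ (ℝ ∙ u)ᗮ :=
  (Submodule.orthogonalProjectionOnto (ℝ ∙ u)ᗮ x).2

lemma projH_inner (u x : E) : ⟪u, projHyperplane u x⟫_ℝ = 0 := by
  have := projH_mem u x
  rw [Submodule.mem_orthogonal] at this
  have := this u (Submodule.mem_span_singleton_self u)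
  simpa [real_inner_comm] using this

lemma projH_sub (u x y : E) (hu : ‖u‖ = 1) :
    projHyperplane u x - projHyperplane u y = projHyperplane u (x - y) := by
  simp only [projH_eq _ _ hu, inner_sub_right, sub_smul]
  abel

lemma projH_norm_le (u x : E) (hu : ‖u‖ = 1) : ‖projHyperplane u x‖ ≤ ‖x‖ := by
  have h : ‖projHyperplane u x‖^2 = ‖x‖^2 - ⟪u, x⟫_ℝ^2 := by
    rw [projH_eq _ _ hu, norm_sub_sq_real, norm_smul, inner_smul_right,
      real_inner_comm x u, hu, mul_one, Real.norm_eq_abs, sq_abs]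
    ring
  nlinarith [norm_nonneg (projHyperplane u x), norm_nonneg x, sq_nonneg (⟪u, x⟫_ℝ)]

lemma projH_smul (u : E) (c : ℝ) (x : E) (hu : ‖u‖ = 1) :
    projHyperplane u (c • x) = c • projHyperplane u x := by
  simp only [projH_eq _ _ hu, inner_smul_right, smul_sub, smul_smul]

lemma projH_add (u x y : E) (hu : ‖u‖ = 1) :
    projHyperplane u (x + y) = projHyperplane u x + projHyperplane u y := by
  simp only [projH_eq _ _ hu, inner_add_right, add_smul]
  abel

lemma projH_convex (u : E) (hu : ‖u‖ = 1) {M : Set (EuclideanSpace ℝ (Fin n))}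
    (hM : Convex ℝ M) : Convex ℝ (projHyperplane u '' M) := by
  rintro _ ⟨a, ha, rfl⟩ _ ⟨b, hb, rfl⟩ s t hs ht hst
  refine ⟨s • a + t • b, hM ha hb hs ht hst, ?_⟩
  rw [projH_add _ _ _ hu, projH_smul _ _ _ hu, projH_smul _ _ _ hu]

/-- finding a preimage in the slice hyperplane -/
lemma slice_proj (u w : E) (hu : ‖u‖ = 1) (hw : ‖w‖ = 1) (α : ℝ) (hα : 0 < α)
    (hβ : α ≤ |⟪w, u⟫_ℝ|) (y : E) (hy : ⟪u, y⟫_ℝ = 0) :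
    ∃ a : E, ⟪w, a⟫_ℝ = 0 ∧ ‖a‖ ≤ ‖y‖ / α ∧ projHyperplane u a = y := by
  set β := ⟪w, u⟫_ℝ with hβdef
  have hβ0 : β ≠ 0 := by
    intro h; rw [h] at hβ; simp at hβ; linarith
  refine ⟨y - (⟪w, y⟫_ℝ / β) • u, ?_, ?_, ?_⟩
  · rw [inner_sub_right, inner_smul_right, ← hβdef, div_mul_cancel₀ _ hβ0, sub_self]
  · have huy : ⟪y, u⟫_ℝ = 0 := by rw [real_inner_comm]; exact hy
    have hna : ‖y - (⟪w, y⟫_ℝ / β) • u‖^2 = ‖y‖^2 + (⟪w, y⟫_ℝ / β)^2 := by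
      rw [norm_sub_sq_real, inner_smul_right, huy, norm_smul, hu, mul_one, Real.norm_eq_abs,
        sq_abs]
      ring
    -- bound |⟪w,y⟫| ≤ sqrt(1-β²)‖y‖ ; we use squared bounds
    have hwy : ⟪w, y⟫_ℝ^2 ≤ (1 - β^2) * ‖y‖^2 := by
      have h1 : ⟪w - β • u, y⟫_ℝ = ⟪w, y⟫_ℝ := by
        rw [inner_sub_left, inner_smul_left]
        simp [hy]
      have h2 : |⟪w - β • u, y⟫_ℝ| ≤ ‖w - β • u‖ * ‖y‖ := abs_real_inner_le_norm _ _
      have h3 : ‖w - β • u‖^2 = 1 - β^2 := by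
        rw [norm_sub_sq_real, inner_smul_right, norm_smul]
        simp [hu, hw, hβdef]
        ring
      calc ⟪w, y⟫_ℝ^2 = |⟪w - β • u, y⟫_ℝ|^2 := by rw [h1, sq_abs]
        _ ≤ (‖w - β • u‖ * ‖y‖)^2 := by
            apply sq_le_sq' <;> nlinarith [abs_nonneg (⟪w - β • u, y⟫_ℝ), norm_nonneg (w - β•u), norm_nonneg y]
        _ = (1 - β^2) * ‖y‖^2 := by rw [mul_pow, h3]
    have hβ2 : α^2 ≤ β^2 := by
      have := sq_abs β
      nlinarith [abs_nonneg β]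
    have hβ2pos : 0 < β^2 := by positivity
    have hα2pos : 0 < α^2 := by positivity
    have hkey : ‖y - (⟪w, y⟫_ℝ / β) • u‖^2 ≤ (‖y‖/α)^2 := by
      rw [hna, div_pow, div_pow]
      have h4 : ⟪w, y⟫_ℝ^2/β^2 ≤ ((1:ℝ) - β^2)*‖y‖^2/β^2 := by gcongr
      have h5 : ((1:ℝ)-β^2)*‖y‖^2/β^2 = ‖y‖^2/β^2 - ‖y‖^2 := by field_simp
      have h6 : ‖y‖^2/β^2 ≤ ‖y‖^2/α^2 := by
        apply div_le_div_of_nonneg_left (by positivity) hα2pos hβ2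
      linarith
    nlinarith [norm_nonneg (y - (⟪w, y⟫_ℝ / β) • u), norm_nonneg y,
      div_nonneg (norm_nonneg y) hα.le]
  · rw [projH_eq _ _ hu]
    have : ⟪u, y - (⟪w, y⟫_ℝ / β) • u⟫_ℝ = -(⟪w, y⟫_ℝ / β) := by
      rw [inner_sub_right, inner_smul_right, hy, real_inner_self_eq_norm_sq, hu]
      ring
    rw [this]
    module

lemma disk_measure_eq (P : Submodule ℝ (EuclideanSpace ℝ (Fin n))) (c : EuclideanSpace ℝ (Fin n))
    (hc : c ∈ P) (ε : ℝ) :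
    μH[(finrank ℝ ↥P : ℝ)] ((↑P : Set (EuclideanSpace ℝ (Fin n))) ∩ ball c ε)
      = μH[(finrank ℝ ↥P : ℝ)] (ball (0 : EuclideanSpace ℝ (Fin (finrank ℝ ↥P))) ε) := by
  set k := finrank ℝ ↥P
  let B := (stdOrthonormalBasis ℝ ↥P).repr
  let ψ : EuclideanSpace ℝ (Fin k) → E := fun y => c + ↑(B.symm y)
  have hψ : Isometry ψ := by
    intro y y'
    simp only [ψ, edist_dist, dist_eq_norm]
    have : c + ↑(B.symm y) - (c + ↑(B.symm y')) = (↑(B.symm y - B.symm y') : E) := by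
      rw [Submodule.coe_sub]; abel
    rw [this]
    have : ‖(↑(B.symm y - B.symm y') : E)‖ = ‖B.symm y - B.symm y'‖ := rfl
    rw [this, ← map_sub, B.symm.norm_map, ← dist_eq_norm, dist_eq_norm]
  have himg : ψ '' (ball 0 ε) = (↑P : Set E) ∩ ball c ε := by
    ext x
    constructor
    · rintro ⟨y, hy, rfl⟩
      refine ⟨P.add_mem hc (B.symm y).2, ?_⟩
      simp only [mem_ball, dist_eq_norm] at hy ⊢
      have : c + ↑(B.symm y) - c = (↑(B.symm y) : E) := by abel
      rw [this]
      have : ‖(↑(B.symm y) : E)‖ = ‖B.symm y‖ := rfl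
      rw [this, B.symm.norm_map]
      simpa using hy
    · rintro ⟨hxP, hx⟩
      refine ⟨B ⟨x - c, P.sub_mem hxP hc⟩, ?_, ?_⟩
      · simp only [mem_ball, dist_eq_norm] at hx ⊢
        rw [sub_zero, B.norm_map]
        have : ‖(⟨x - c, P.sub_mem hxP hc⟩ : ↥P)‖ = ‖x - c‖ := rfl
        rw [this]; exact hx
      · simp only [ψ, LinearIsometryEquiv.symm_apply_apply]
        exact by abel
  rw [← himg, hψ.hausdorffMeasure_image (Or.inl (by positivity))]

lemma euclid_ball_pos (m : ℕ) {ε : ℝ} (hε : 0 < ε) :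
    0 < (μH[(m:ℝ)] : Measure (EuclideanSpace ℝ (Fin m))) (ball 0 ε) := by
  have h : ((m:ℝ)) = ((Module.finrank ℝ (EuclideanSpace ℝ (Fin m)) : ℕ) : ℝ) := by
    rw [finrank_euclideanSpace_fin]
  rw [h]
  exact measure_ball_pos _ _ hε

lemma euclid_ball_lt_top (m : ℕ) (ε : ℝ) :
    (μH[(m:ℝ)] : Measure (EuclideanSpace ℝ (Fin m))) (ball 0 ε) < ⊤ := by
  have h : ((m:ℝ)) = ((Module.finrank ℝ (EuclideanSpace ℝ (Fin m)) : ℕ) : ℝ) := by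
    rw [finrank_euclideanSpace_fin]
  rw [h]
  exact lt_of_le_of_lt (measure_mono ball_subset_closedBall)
    ((isCompact_closedBall _ _).measure_lt_top)

lemma finrank_orth (u : EuclideanSpace ℝ (Fin n)) (hu : u ≠ 0) :
    Module.finrank ℝ ↥((ℝ ∙ u)ᗮ) = n - 1 := by
  have h1 := Submodule.finrank_add_finrank_orthogonal (K := (ℝ ∙ u))
  rw [finrank_span_singleton hu, finrank_euclideanSpace_fin] at h1
  omega

lemma projH_lipschitz (u : E) (hu : ‖u‖ = 1) : LipschitzWith 1 (projHyperplane u) := by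
  apply LipschitzWith.of_dist_le_mul
  intro x y
  rw [NNReal.coe_one, one_mul, dist_eq_norm, dist_eq_norm, projH_sub _ _ _ hu]
  exact projH_norm_le _ _ hu

set_option maxHeartbeats 1000000 in
lemma cap_pos (hn : 1 ≤ n) (u₀ : E) (hu₀ : ‖u₀‖ = 1) (r : ℝ) (hr : 0 < r) :
    0 < μH[(n:ℝ) - 1] (sphere (0:E) 1 ∩ ball u₀ r) := by
  have hu₀ne : u₀ ≠ 0 := by intro h; rw [h, norm_zero] at hu₀; norm_num at hu₀
  set P := (ℝ ∙ u₀)ᗮ with hP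
  set r' : ℝ := min (r/2) (1/2) with hr'def
  have hr' : 0 < r' := lt_min (by linarith) (by norm_num)
  have hr'le : r' ≤ 1/2 := min_le_right _ _
  have hr'r : r' ≤ r/2 := min_le_left _ _
  have hsub : ((↑P : Set E) ∩ ball (0:E) r') ⊆
      projHyperplane u₀ '' (sphere (0:E) 1 ∩ ball u₀ r) := by
    rintro y ⟨hyP, hy⟩
    have hyin : ⟪u₀, y⟫_ℝ = 0 := Submodule.mem_orthogonal_singleton_iff_inner_right.mp hyP
    rw [mem_ball_zero_iff] at hy
    have hy1 : ‖y‖ ≤ 1/2 := le_of_lt (lt_of_lt_of_le hy hr'le)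
    have hy2 : (0:ℝ) ≤ 1 - ‖y‖^2 := by nlinarith [norm_nonneg y]
    set τ := Real.sqrt (1 - ‖y‖^2) with hτdef
    have hτnn : 0 ≤ τ := Real.sqrt_nonneg _
    have hτ2 : τ^2 = 1 - ‖y‖^2 := Real.sq_sqrt hy2
    have hτ1 : τ ≤ 1 := by
      have hq : τ^2 ≤ 1 := by rw [hτ2]; nlinarith [norm_nonneg y]
      nlinarith
    set z := y + τ • u₀ with hzdef
    have hyu : ⟪y, u₀⟫_ℝ = 0 := by rw [real_inner_comm]; exact hyin
    have hz2 : ‖z‖^2 = 1 := by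
      rw [hzdef, norm_add_sq_real, inner_smul_right, hyu, norm_smul, hu₀, mul_one,
        Real.norm_eq_abs, sq_abs]
      rw [hτ2]; ring
    have hznorm : ‖z‖ = 1 := by
      have h1 : (‖z‖ - 1) * (‖z‖ + 1) = 0 := by nlinarith
      rcases mul_eq_zero.mp h1 with h | h
      · linarith
      · nlinarith [norm_nonneg z]
    have hzS : z ∈ sphere (0:E) 1 := by
      rw [mem_sphere_zero_iff_norm]; exact hznorm
    have hzb : z ∈ ball u₀ r := by
      rw [mem_ball, dist_eq_norm]
      have hdec : z - u₀ = y + (τ - 1) • u₀ := by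
        rw [hzdef, sub_smul, one_smul]; abel
      have hd2 : ‖z - u₀‖^2 = ‖y‖^2 + (τ-1)^2 := by
        rw [hdec, norm_add_sq_real, inner_smul_right, hyu, norm_smul, hu₀, mul_one,
          Real.norm_eq_abs, sq_abs]
        ring
      have hττ : τ^2 ≤ τ := by nlinarith
      have h1τ : 1 - τ ≤ ‖y‖^2 := by linarith [hτ2, hττ]
      have h0τ : 0 ≤ 1 - τ := by linarith
      have ha : (τ-1)^2 ≤ ‖y‖^2 * ‖y‖^2 := by nlinarith
      have hy21 : ‖y‖^2 ≤ 1 := by nlinarith [norm_nonneg y]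
      have hfin : ‖z - u₀‖^2 ≤ 2 * ‖y‖^2 := by nlinarith [norm_nonneg y]
      have hyr : ‖y‖ < r/2 := lt_of_lt_of_le hy hr'r
      have hsq : ‖z - u₀‖^2 < r^2 := by nlinarith [norm_nonneg y]
      nlinarith [norm_nonneg (z - u₀)]
    refine ⟨z, ⟨hzS, hzb⟩, ?_⟩
    rw [projH_eq _ _ hu₀]
    have : ⟪u₀, z⟫_ℝ = τ := by
      rw [hzdef, inner_add_right, inner_smul_right, hyin, real_inner_self_eq_norm_sq, hu₀]
      ring
    rw [this, hzdef]
    module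
  have hd0 : (0:ℝ) ≤ (n:ℝ) - 1 := by
    have : (1:ℝ) ≤ (n:ℝ) := by exact_mod_cast hn
    linarith
  have hlip := (projH_lipschitz u₀ hu₀).hausdorffMeasure_image_le hd0
    (sphere (0:E) 1 ∩ ball u₀ r)
  have h2 : 0 < μH[(n:ℝ)-1] ((↑P : Set E) ∩ ball (0:E) r') := by
    have hfr := finrank_orth u₀ hu₀ne
    have hexp : ((Module.finrank ℝ ↥P : ℕ) : ℝ) = (n:ℝ) - 1 := by
      rw [hfr, Nat.cast_sub hn, Nat.cast_one]
    rw [← hexp]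
    rw [disk_measure_eq P 0 (zero_mem P) r']
    exact euclid_ball_pos _ hr'
  have hc1 : μH[(n:ℝ)-1] ((↑P : Set E) ∩ ball (0:E) r')
      ≤ μH[(n:ℝ)-1] (projHyperplane u₀ '' (sphere (0:E) 1 ∩ ball u₀ r)) := measure_mono hsub
  have hc2 := le_trans hc1 hlip
  rw [ENNReal.coe_one, ENNReal.one_rpow, one_mul] at hc2
  exact lt_of_lt_of_le h2 hc2

lemma norm_coord_le (x : E) (i : Fin n) : |x i| ≤ ‖x‖ := by
  have h := abs_real_inner_le_norm (EuclideanSpace.single i (1:ℝ)) x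
  rw [EuclideanSpace.inner_single_left, EuclideanSpace.norm_single] at h
  simpa using h

lemma normalize_lipschitzOn :
    LipschitzOnWith 2 (fun x : E => ‖x‖⁻¹ • x) {x : E | (1:ℝ) ≤ ‖x‖} := by
  apply LipschitzOnWith.of_dist_le_mul
  intro x hx y hy
  simp only [Set.mem_setOf_eq] at hx hy
  have hxpos : (0:ℝ) < ‖x‖ := lt_of_lt_of_le one_pos hx
  have hypos : (0:ℝ) < ‖y‖ := lt_of_lt_of_le one_pos hy
  rw [dist_eq_norm, dist_eq_norm]
  have hid : ‖x‖⁻¹ • x - ‖y‖⁻¹ • y = ‖x‖⁻¹ • (x - y) + (‖x‖⁻¹ - ‖y‖⁻¹) • y := by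
    module
  rw [hid]
  have h1 : ‖‖x‖⁻¹ • (x - y)‖ ≤ ‖x - y‖ := by
    rw [norm_smul, Real.norm_eq_abs, abs_of_pos (inv_pos.mpr hxpos)]
    have : ‖x‖⁻¹ ≤ 1 := by
      rw [inv_le_one_iff₀]; right; exact hx
    nlinarith [norm_nonneg (x - y)]
  have h2 : ‖(‖x‖⁻¹ - ‖y‖⁻¹) • y‖ ≤ ‖x - y‖ := by
    rw [norm_smul, Real.norm_eq_abs]
    have e1 : (‖x‖⁻¹ - ‖y‖⁻¹) * ‖y‖ = (‖y‖ - ‖x‖)/‖x‖ := by field_simp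
    have e2 : |‖x‖⁻¹ - ‖y‖⁻¹| * ‖y‖ = |(‖x‖⁻¹ - ‖y‖⁻¹) * ‖y‖| := by
      rw [abs_mul, abs_of_pos hypos]
    rw [e2, e1, abs_div, abs_of_pos hxpos]
    have h3 : |‖y‖ - ‖x‖| ≤ ‖x - y‖ := by
      have := abs_norm_sub_norm_le y x
      rwa [norm_sub_rev] at this
    calc |‖y‖ - ‖x‖| / ‖x‖ ≤ |‖y‖ - ‖x‖| / 1 := by
          apply div_le_div_of_nonneg_left (abs_nonneg _) one_pos hx
      _ = |‖y‖ - ‖x‖| := div_one _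
      _ ≤ ‖x - y‖ := h3
  have h5 := norm_add_le (‖x‖⁻¹ • (x - y)) ((‖x‖⁻¹ - ‖y‖⁻¹) • y)
  have hcoe : ((2:NNReal):ℝ) * ‖x - y‖ = ‖x - y‖ + ‖x - y‖ := by push_cast; ring
  rw [hcoe]
  linarith

set_option maxHeartbeats 1000000 in
lemma sphere_lt_top (hn : 1 ≤ n) : μH[(n:ℝ)-1] (sphere (0:E) 1) < ⊤ := by
  haveI : Nonempty (Fin n) := ⟨⟨0, hn⟩⟩
  have hd0 : (0:ℝ) ≤ (n:ℝ) - 1 := by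
    have : (1:ℝ) ≤ (n:ℝ) := by exact_mod_cast hn
    linarith
  set r : E → E := fun x => ‖x‖⁻¹ • x with hrdef
  set G : Fin n → Bool → Set (EuclideanSpace ℝ (Fin n)) := fun i s =>
    {x : EuclideanSpace ℝ (Fin n) | x i = (if s then (1:ℝ) else -1) ∧ ‖x‖ ≤ (n:ℝ)+1} with hGdef
  have hG1 : ∀ i s, G i s ⊆ {x : E | (1:ℝ) ≤ ‖x‖} := by
    rintro i s x ⟨hxi, _⟩
    have := norm_coord_le x i
    rw [hxi] at this
    rcases s with _ | _ <;> simp at this <;> [skip; skip] <;> exact this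
  have hcover : sphere (0:E) 1 ⊆ ⋃ i : Fin n, ⋃ s : Bool, r '' (G i s) := by
    intro v hv
    rw [mem_sphere_zero_iff_norm] at hv
    have hsum : ∑ j, |v j|^2 = 1 := by
      have h := congrArg (fun t : ℝ => t^2) hv
      rw [EuclideanSpace.norm_eq, Real.sq_sqrt (by positivity)] at h
      simpa [Real.norm_eq_abs] using h
    have hex : ∃ i : Fin n, 1/(n:ℝ) ≤ |v i|^2 := by
      by_contra hcon
      push_neg at hcon
      have hlt : ∑ j, |v j|^2 < ∑ _j : Fin n, 1/(n:ℝ) :=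
        Finset.sum_lt_sum_of_nonempty Finset.univ_nonempty (fun i _ => hcon i)
      rw [Finset.sum_const, Finset.card_univ, Fintype.card_fin, nsmul_eq_mul] at hlt
      have hnn : (n:ℝ) ≠ 0 := by positivity
      rw [mul_one_div, div_self hnn] at hlt
      linarith [hsum]
    obtain ⟨i, hi⟩ := hex
    set c := |v i| with hcdef
    have hnpos : (0:ℝ) < (n:ℝ) := by positivity
    have hc0 : 0 < c := by
      rcases eq_or_ne (v i) 0 with h0 | h0
      · exfalso
        have hz : c = 0 := by rw [hcdef, h0, abs_zero]
        rw [hz] at hi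
        have := one_div_pos.mpr hnpos
        nlinarith
      · rw [hcdef]; exact abs_pos.mpr h0
    have hc1 : c ≤ 1 := by rw [hcdef, ← hv]; exact norm_coord_le v i
    have hcn : 1/(n:ℝ) ≤ c := by nlinarith
    refine Set.mem_iUnion.mpr ⟨i, Set.mem_iUnion.mpr ⟨decide (0 < v i), ?_⟩⟩
    refine ⟨c⁻¹ • v, ⟨?_, ?_⟩, ?_⟩
    · show c⁻¹ * v i = _
      have hvine : v i ≠ 0 := by
        intro h; rw [hcdef, h, abs_zero] at hc0; exact lt_irrefl _ hc0
      rcases lt_trichotomy (v i) 0 with h | h | h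
      · have : decide (0 < v i) = false := by simp [not_lt.mpr h.le, h]
        rw [this]
        simp only [Bool.false_eq_true, if_false]
        rw [hcdef, abs_of_neg h]
        field_simp
      · exact absurd h hvine
      · have : decide (0 < v i) = true := by simp [h]
        rw [this]
        simp only [if_true]
        rw [hcdef, abs_of_pos h]
        field_simp
    · show ‖c⁻¹ • v‖ ≤ _
      rw [norm_smul, hv, mul_one, Real.norm_eq_abs, abs_of_pos (inv_pos.mpr hc0)]
      have h6 : (n:ℝ) * (1/(n:ℝ)) ≤ (n:ℝ) * c := mul_le_mul_of_nonneg_left hcn (le_of_lt hnpos)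
      rw [mul_one_div, div_self (ne_of_gt hnpos)] at h6
      have : c⁻¹ ≤ (n:ℝ) := by
        rw [inv_eq_one_div, div_le_iff₀ hc0]
        linarith
      linarith
    · show r (c⁻¹ • v) = v
      rw [hrdef]
      simp only
      rw [norm_smul, hv, mul_one, Real.norm_eq_abs, abs_of_pos (inv_pos.mpr hc0), inv_inv,
        smul_smul, mul_inv_cancel₀ (ne_of_gt hc0), one_smul]
  have hGfin : ∀ (i : Fin n) (s : Bool), μH[(n:ℝ)-1] (G i s) < ⊤ := by
    intro i s
    set u : EuclideanSpace ℝ (Fin n) := EuclideanSpace.single i (1:ℝ) with hudef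
    have hu1 : ‖u‖ = 1 := by rw [hudef, EuclideanSpace.norm_single]; norm_num
    have hune : u ≠ 0 := by intro h; rw [h, norm_zero] at hu1; norm_num at hu1
    set σ : ℝ := if s then (1:ℝ) else -1 with hσdef
    have hσ1 : |σ| = 1 := by rcases s with _ | _ <;> simp [hσdef]
    have hsubG : G i s ⊆ (fun y => y + σ • u) ''
        ((↑((ℝ ∙ u)ᗮ) : Set (EuclideanSpace ℝ (Fin n))) ∩ ball 0 ((n:ℝ)+3)) := by
      rintro x ⟨hxi, hxn⟩
      refine ⟨x - σ • u, ⟨?_, ?_⟩, by module⟩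
      · apply Submodule.mem_orthogonal_singleton_iff_inner_right.mpr
        rw [inner_sub_right, inner_smul_right, real_inner_self_eq_norm_sq, hu1]
        rw [hudef, EuclideanSpace.inner_single_left]
        simp [hxi, hσdef]
      · rw [mem_ball_zero_iff]
        have h1 : ‖x - σ • u‖ ≤ ‖x‖ + ‖σ • u‖ := norm_sub_le _ _
        rw [norm_smul, hu1, mul_one, Real.norm_eq_abs, hσ1] at h1
        linarith
    have hiso : Isometry (fun y : EuclideanSpace ℝ (Fin n) => y + σ • u) :=
      Isometry.of_dist_eq (fun a b => dist_add_right a b _)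
    have himgeq := hiso.hausdorffMeasure_image (Or.inl hd0)
      ((↑((ℝ ∙ u)ᗮ) : Set (EuclideanSpace ℝ (Fin n))) ∩ ball 0 ((n:ℝ)+3))
    have hdisk : μH[(n:ℝ)-1]
        ((↑((ℝ ∙ u)ᗮ) : Set (EuclideanSpace ℝ (Fin n))) ∩ ball 0 ((n:ℝ)+3)) < ⊤ := by
      have hfr := finrank_orth u hune
      have hexp : ((Module.finrank ℝ ↥((ℝ ∙ u)ᗮ) : ℕ) : ℝ) = (n:ℝ) - 1 := by
        rw [hfr, Nat.cast_sub hn, Nat.cast_one]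
      rw [← hexp, disk_measure_eq _ 0 (zero_mem _) _]
      exact euclid_ball_lt_top _ _
    calc μH[(n:ℝ)-1] (G i s) ≤ _ := measure_mono hsubG
      _ = _ := himgeq
      _ < ⊤ := hdisk
  have hrG : ∀ (i : Fin n) (s : Bool), μH[(n:ℝ)-1] (r '' G i s) < ⊤ := by
    intro i s
    have hle := (normalize_lipschitzOn.mono (hG1 i s)).hausdorffMeasure_image_le hd0
    apply lt_of_le_of_lt hle
    apply ENNReal.mul_lt_top _ (hGfin i s)
    exact ENNReal.rpow_lt_top_of_nonneg hd0 ENNReal.coe_ne_top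
  calc μH[(n:ℝ)-1] (sphere (0:E) 1) ≤ μH[(n:ℝ)-1] (⋃ i : Fin n, ⋃ s : Bool, r '' (G i s)) :=
        measure_mono hcover
    _ ≤ ∑' i : Fin n, μH[(n:ℝ)-1] (⋃ s : Bool, r '' (G i s)) := measure_iUnion_le _
    _ ≤ ∑' i : Fin n, ∑' s : Bool, μH[(n:ℝ)-1] (r '' (G i s)) := by
        apply ENNReal.tsum_le_tsum
        intro i
        exact measure_iUnion_le _
    _ < ⊤ := by
        rw [tsum_fintype]
        apply ENNReal.sum_lt_top.mpr
        intro i _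
        rw [tsum_fintype]
        apply ENNReal.sum_lt_top.mpr
        intro s _
        exact hrG i s

set_option maxHeartbeats 1000000 in
lemma main_aux (hn : 2 ≤ n) (M N : Set (EuclideanSpace ℝ (Fin n))) (hMconv : Convex ℝ M)
    (u₀ w : E) (hu₀ : ‖u₀‖ = 1) (hw : ‖w‖ = 1) (α ρ δ r₁ : ℝ)
    (hα : 0 < α) (hρ : 0 < ρ) (hδ : 0 < δ) (hr₁ : 0 < r₁)
    (hβ : 2*α ≤ |⟪w, u₀⟫_ℝ|) (p z : E) (hp : p ∈ M)
    (hslice : ∀ a : E, ⟪w, a⟫_ℝ = 0 → ‖a‖ < ρ → z + a ∈ M)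
    (hfar : ∀ u : E, ‖u‖ = 1 → ‖u - u₀‖ < r₁ → ∀ q ∈ N,
      δ ≤ dist (projHyperplane u p) (projHyperplane u q)) :
    0 < ∫⁻ u, μH[(n:ℝ) - 1] (symmDiff (projHyperplane u '' M) (projHyperplane u '' N))
        ∂(sphereMeasure n) := by
  have hn1 : 1 ≤ n := by omega
  have hexp : (((n-1:ℕ)):ℝ) = (n:ℝ)-1 := by rw [Nat.cast_sub hn1, Nat.cast_one]
  set r := min r₁ α with hrdef
  have hr : 0 < r := lt_min hr₁ hα
  set D := ‖p - z‖ with hDdef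
  have hD0 : 0 ≤ D := norm_nonneg _
  set t := δ / (2*(D + α*ρ) + δ) with htdef
  have hden : 0 < 2*(D + α*ρ) + δ := by positivity
  have ht0 : 0 < t := by positivity
  have ht1 : t ≤ 1 := by
    rw [htdef, div_le_one hden]
    nlinarith
  have htb : t*(D + α*ρ) ≤ δ/2 := by
    rw [htdef, div_mul_eq_mul_div, div_le_iff₀ hden]
    nlinarith
  set ε := t*(α*ρ) with hεdef
  have hε0 : 0 < ε := by positivity
  set κ := μH[(n:ℝ)-1] (ball (0 : EuclideanSpace ℝ (Fin (n-1))) ε) with hκdef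
  have hκ0 : 0 < κ := by
    rw [hκdef, ← hexp]
    exact euclid_ball_pos _ hε0
  -- pointwise lower bound on spherical cap
  have hpoint : ∀ u : E, ‖u‖ = 1 → ‖u - u₀‖ < r →
      κ ≤ μH[(n:ℝ)-1] (symmDiff (projHyperplane u '' M) (projHyperplane u '' N)) := by
    intro u hu hur
    have hur₁ : ‖u - u₀‖ < r₁ := lt_of_lt_of_le hur (min_le_left _ _)
    have hurα : ‖u - u₀‖ < α := lt_of_lt_of_le hur (min_le_right _ _)
    have hβu : α ≤ |⟪w, u⟫_ℝ| := by
      have h1 : |⟪w, u⟫_ℝ - ⟪w, u₀⟫_ℝ| ≤ ‖u - u₀‖ := by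
        rw [← inner_sub_right]
        have := abs_real_inner_le_norm w (u - u₀)
        rwa [hw, one_mul] at this
      have h2 := abs_sub_abs_le_abs_sub (⟪w, u₀⟫_ℝ) (⟪w, u⟫_ℝ)
      rw [abs_sub_comm] at h2
      linarith
    have hune : u ≠ 0 := by intro h; rw [h, norm_zero] at hu; norm_num at hu
    set P := (ℝ ∙ u)ᗮ with hPdef
    have hfr : finrank ℝ ↥P = n - 1 := finrank_orth u hune
    have hmemP : ∀ v : E, v ∈ P ↔ ⟪u, v⟫_ℝ = 0 := fun v =>
      Submodule.mem_orthogonal_singleton_iff_inner_right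
    -- the image of M contains a translate of a small disk around proj z
    have hsliceimg : ∀ y : E, ⟪u, y⟫_ℝ = 0 → ‖y‖ < α*ρ →
        projHyperplane u z + y ∈ projHyperplane u '' M := by
      intro y hy hylt
      obtain ⟨a, haw, hale, hap⟩ := slice_proj u w hu hw α hα hβu y hy
      have haρ : ‖a‖ < ρ := by
        apply lt_of_le_of_lt hale
        rw [div_lt_iff₀ hα]
        nlinarith
      exact ⟨z + a, hslice a haw haρ, by rw [projH_add _ _ _ hu, hap]⟩
    set p' := projHyperplane u p with hp'def
    set z' := projHyperplane u z with hz'def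
    have hp'P : p' ∈ P := projH_mem u p
    have hz'P : z' ∈ P := projH_mem u z
    set c := p' + t • (z' - p') with hcdef
    have hcP : c ∈ P := P.add_mem hp'P (P.smul_mem _ (P.sub_mem hz'P hp'P))
    have hz'p' : ‖z' - p'‖ ≤ D := by
      rw [hz'def, hp'def, projH_sub _ _ _ hu, hDdef, ← norm_neg (p - z)]
      have h := projH_norm_le u (z - p) hu
      have hne : -(p - z) = z - p := by abel
      rw [hne]
      exact h
    have hdisk_sub : (↑P : Set (EuclideanSpace ℝ (Fin n))) ∩ ball c ε ⊆
        (projHyperplane u '' M) \ (projHyperplane u '' N) := by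
      rintro b ⟨hbP, hbball⟩
      rw [mem_ball, dist_eq_norm] at hbball
      have hbc : ‖b - c‖ < ε := hbball
      constructor
      · set y₀ := p' + t⁻¹ • (b - p') with hy₀def
        have h1 : b - c = (b - p') - t • (z' - p') := by rw [hcdef]; abel
        have h2 : t⁻¹ • (b - c) = t⁻¹ • (b - p') - (z' - p') := by
          rw [h1, smul_sub, inv_smul_smul₀ ht0.ne']
        have hyeq : y₀ - z' = t⁻¹ • (b - c) := by
          rw [hy₀def, h2]; abel
        have hynorm : ‖y₀ - z'‖ < α*ρ := by
          rw [hyeq, norm_smul, Real.norm_eq_abs, abs_of_pos (inv_pos.mpr ht0)]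
          have : t⁻¹ * ‖b - c‖ < t⁻¹ * ε := by
            apply mul_lt_mul_of_pos_left hbc (inv_pos.mpr ht0)
          rw [hεdef] at this
          rwa [inv_mul_cancel_left₀ ht0.ne'] at this
        have hyP : ⟪u, y₀ - z'⟫_ℝ = 0 := by
          have hb0 : ⟪u, b⟫_ℝ = 0 := (hmemP b).mp hbP
          have hp0 : ⟪u, p'⟫_ℝ = 0 := (hmemP p').mp hp'P
          have hz0 : ⟪u, z'⟫_ℝ = 0 := (hmemP z').mp hz'P
          rw [hy₀def]
          rw [inner_sub_right, inner_add_right, inner_smul_right, inner_sub_right]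
          rw [hb0, hp0, hz0]
          ring
        have hy₀M : y₀ ∈ projHyperplane u '' M := by
          have := hsliceimg (y₀ - z') hyP hynorm
          rwa [add_sub_cancel] at this
        have hp'M : p' ∈ projHyperplane u '' M := ⟨p, hp, rfl⟩
        have hcomb : (1-t) • p' + t • y₀ = b := by
          rw [hy₀def, smul_add, smul_inv_smul₀ ht0.ne']
          module
        rw [← hcomb]
        exact projH_convex u hu hMconv hp'M hy₀M (by linarith) ht0.le (by ring)
      · rintro ⟨q, hqN, hqe⟩
        have hfq := hfar u hu hur₁ q hqN
        rw [hqe] at hfq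
        have hcb : ‖c - p'‖ ≤ t * D := by
          rw [hcdef]
          have : p' + t • (z' - p') - p' = t • (z' - p') := by abel
          rw [this, norm_smul, Real.norm_eq_abs, abs_of_pos ht0]
          exact mul_le_mul_of_nonneg_left hz'p' ht0.le
        have hbp' : ‖b - p'‖ < δ := by
          have h3 : ‖b - p'‖ ≤ ‖b - c‖ + ‖c - p'‖ := by
            have := norm_add_le (b - c) (c - p')
            have he : b - c + (c - p') = b - p' := by abel
            rwa [he] at this
          have h4 : ‖b - c‖ + ‖c - p'‖ < ε + t * D := by
            apply add_lt_add_of_lt_of_le hbc hcb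
          have h5 : ε + t*D = t*(D + α*ρ) := by rw [hεdef]; ring
          linarith [htb, hδ]
        have : dist p' b < δ := by
          rw [dist_eq_norm, ← norm_neg (p' - b)]
          have he : -(p' - b) = b - p' := by abel
          rwa [he]
        exact absurd hfq (by rw [dist_comm] at this ⊢; linarith)
    have hkey := disk_measure_eq P c hcP ε
    rw [hfr] at hkey
    rw [hexp] at hkey
    have hsd : (↑P : Set (EuclideanSpace ℝ (Fin n))) ∩ ball c ε ⊆
        symmDiff (projHyperplane u '' M) (projHyperplane u '' N) := by
      refine subset_trans hdisk_sub ?_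
      rw [Set.symmDiff_def]
      exact Set.subset_union_left
    calc κ = μH[(n:ℝ)-1] ((↑P : Set (EuclideanSpace ℝ (Fin n))) ∩ ball c ε) := hkey.symm
      _ ≤ _ := measure_mono hsd
  -- lintegral lower bound
  have hS : MeasurableSet (sphere (0:E) 1) := isClosed_sphere.measurableSet
  rw [sphereMeasure, lintegral_smul_measure]
  have hSfin := sphere_lt_top (n := n) hn1
  have hinv : (μH[(n:ℝ)-1] (sphere (0:E) 1))⁻¹ ≠ 0 := by
    rw [ne_eq, ENNReal.inv_eq_zero]
    exact hSfin.ne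
  have hae : ∀ᵐ u ∂(μH[(n:ℝ)-1].restrict (sphere (0:E) 1)),
      (ball u₀ r).indicator (fun _ => κ) u ≤
        μH[(n:ℝ)-1] (symmDiff (projHyperplane u '' M) (projHyperplane u '' N)) := by
    filter_upwards [ae_restrict_mem hS] with u huS
    by_cases hub : u ∈ ball u₀ r
    · rw [Set.indicator_of_mem hub]
      apply hpoint u (mem_sphere_zero_iff_norm.mp huS)
      rw [mem_ball, dist_eq_norm] at hub
      exact hub
    · rw [Set.indicator_of_notMem hub]
      exact zero_le
  have hI := lintegral_mono_ae hae
  rw [lintegral_indicator measurableSet_ball] at hI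
  rw [setLIntegral_const, Measure.restrict_apply measurableSet_ball] at hI
  have hcap : 0 < μH[(n:ℝ)-1] (ball u₀ r ∩ sphere (0:E) 1) := by
    rw [Set.inter_comm]
    exact cap_pos hn1 u₀ hu₀ r hr
  have hIpos : 0 < ∫⁻ u, μH[(n:ℝ)-1] (symmDiff (projHyperplane u '' M) (projHyperplane u '' N))
      ∂(μH[(n:ℝ)-1].restrict (sphere (0:E) 1)) := by
    apply lt_of_lt_of_le _ hI
    exact ENNReal.mul_pos hκ0.ne' hcap.ne'
  exact ENNReal.mul_pos hinv hIpos.ne'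


lemma nonempty_of_dim (hn : 2 ≤ n) (K : Set (EuclideanSpace ℝ (Fin n)))
    (hdim : n - 1 ≤ finrank ℝ (affineSpan ℝ K).direction) : K.Nonempty := by
  by_contra h
  rw [Set.not_nonempty_iff_eq_empty] at h
  rw [h] at hdim
  rw [AffineSubspace.span_empty, AffineSubspace.direction_bot, finrank_bot] at hdim
  omega

lemma exists_sep (L : Set (EuclideanSpace ℝ (Fin n))) (hLc : IsCompact L)
    (hLconv : Convex ℝ L) (hLne : L.Nonempty) (x : EuclideanSpace ℝ (Fin n)) (hxL : x ∉ L) :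
    ∃ v : EuclideanSpace ℝ (Fin n), ∃ d' : ℝ, ‖v‖ = 1 ∧ 0 < d' ∧
      ∀ y ∈ L, ⟪v, y⟫_ℝ + d' ≤ ⟪v, x⟫_ℝ := by
  obtain ⟨f, s, hfs, hsx⟩ := geometric_hahn_banach_closed_point hLconv hLc.isClosed hxL
  set v₀ := (InnerProductSpace.toDual ℝ (EuclideanSpace ℝ (Fin n))).symm f with hv₀def
  have hv₀ : ∀ y, ⟪v₀, y⟫_ℝ = f y := fun y => InnerProductSpace.toDual_symm_apply
  obtain ⟨y₀, hy₀⟩ := hLne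
  have hne : v₀ ≠ 0 := by
    intro h0
    have h1 : f y₀ < f x := lt_trans (hfs y₀ hy₀) hsx
    rw [← hv₀ y₀, ← hv₀ x, h0] at h1
    simp at h1
  have hnv₀ : 0 < ‖v₀‖ := norm_pos_iff.mpr hne
  have hsx' : 0 < f x - s := by linarith
  refine ⟨‖v₀‖⁻¹ • v₀, (f x - s)/‖v₀‖, ?_, by positivity, ?_⟩
  · rw [norm_smul, Real.norm_eq_abs, abs_of_pos (inv_pos.mpr hnv₀), inv_mul_cancel₀ hnv₀.ne']
  · intro y hy
    rw [real_inner_smul_left, real_inner_smul_left, hv₀, hv₀, div_eq_inv_mul]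
    have h2 : f y ≤ s := le_of_lt (hfs y hy)
    have h3 : 0 < ‖v₀‖⁻¹ := inv_pos.mpr hnv₀
    nlinarith

lemma exists_unit_orth (hn : 2 ≤ n) (v : EuclideanSpace ℝ (Fin n)) (hv : v ≠ 0) :
    ∃ e : EuclideanSpace ℝ (Fin n), ‖e‖ = 1 ∧ ⟪v, e⟫_ℝ = 0 := by
  have hfr := finrank_orth v hv
  have hne : (ℝ ∙ v)ᗮ ≠ ⊥ := by
    intro h
    rw [h, finrank_bot] at hfr
    omega
  obtain ⟨e₀, he₀P, he₀⟩ := Submodule.exists_mem_ne_zero_of_ne_bot hne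
  have hn₀ : 0 < ‖e₀‖ := norm_pos_iff.mpr he₀
  refine ⟨‖e₀‖⁻¹ • e₀, ?_, ?_⟩
  · rw [norm_smul, Real.norm_eq_abs, abs_of_pos (inv_pos.mpr hn₀), inv_mul_cancel₀ hn₀.ne']
  · rw [inner_smul_right]
    have := Submodule.mem_orthogonal_singleton_iff_inner_right.mp he₀P
    rw [this, mul_zero]

lemma full_interior (K : Set (EuclideanSpace ℝ (Fin n))) (hKconv : Convex ℝ K)
    (hKne : K.Nonempty) (hdim : finrank ℝ (affineSpan ℝ K).direction = n) :
    ∃ z ρ, 0 < ρ ∧ ball z ρ ⊆ K := by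
  have hdir : (affineSpan ℝ K).direction = ⊤ := by
    apply Submodule.eq_top_of_finrank_eq
    rw [hdim, finrank_euclideanSpace_fin]
  have hspanne : ((affineSpan ℝ K : AffineSubspace ℝ (EuclideanSpace ℝ (Fin n))) :
      Set (EuclideanSpace ℝ (Fin n))).Nonempty := by
    obtain ⟨p, hp⟩ := hKne
    exact ⟨p, subset_affineSpan ℝ K hp⟩
  have htop : affineSpan ℝ K = ⊤ :=
    (AffineSubspace.direction_eq_top_iff_of_nonempty hspanne).mp hdir
  have hint : (interior K).Nonempty := by
    rw [hKconv.interior_nonempty_iff_affineSpan_eq_top]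
    exact htop
  obtain ⟨z, hz⟩ := hint
  rw [mem_interior_iff_mem_nhds, Metric.mem_nhds_iff] at hz
  obtain ⟨ρ, hρ, hball⟩ := hz
  exact ⟨z, ρ, hρ, hball⟩

lemma flat_normal (hn1 : 1 ≤ n) (K : Set (EuclideanSpace ℝ (Fin n)))
    (hdim : finrank ℝ (affineSpan ℝ K).direction = n - 1) :
    ∃ w : EuclideanSpace ℝ (Fin n), ‖w‖ = 1 ∧ (affineSpan ℝ K).direction = (ℝ ∙ w)ᗮ := by
  set W := (affineSpan ℝ K).direction with hWdef
  have hWorth : finrank ℝ ↥(Wᗮ) = 1 := by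
    have h1 := Submodule.finrank_add_finrank_orthogonal (K := W)
    rw [hdim, finrank_euclideanSpace_fin] at h1
    omega
  have hne : Wᗮ ≠ ⊥ := by
    intro h
    rw [h, finrank_bot] at hWorth
    omega
  obtain ⟨w₀, hw₀P, hw₀⟩ := Submodule.exists_mem_ne_zero_of_ne_bot hne
  have hn₀ : 0 < ‖w₀‖ := norm_pos_iff.mpr hw₀
  set w := ‖w₀‖⁻¹ • w₀ with hwdef
  have hwP : w ∈ Wᗮ := Wᗮ.smul_mem _ hw₀P
  have hwn : ‖w‖ = 1 := by
    rw [hwdef, norm_smul, Real.norm_eq_abs, abs_of_pos (inv_pos.mpr hn₀), inv_mul_cancel₀ hn₀.ne']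
  have hwne : w ≠ 0 := by intro h; rw [h, norm_zero] at hwn; norm_num at hwn
  refine ⟨w, hwn, ?_⟩
  apply Submodule.eq_of_le_of_finrank_eq
  · intro a ha
    apply Submodule.mem_orthogonal_singleton_iff_inner_right.mpr
    have := (Submodule.mem_orthogonal W w).mp hwP a ha
    rw [real_inner_comm]
    exact this
  · rw [hdim, finrank_orth w hwne]

lemma rel_ball (K : Set (EuclideanSpace ℝ (Fin n))) (hKconv : Convex ℝ K) (hKne : K.Nonempty) :
    ∃ z ρ, 0 < ρ ∧ z ∈ K ∧
      ∀ y ∈ (affineSpan ℝ K : Set (EuclideanSpace ℝ (Fin n))), dist y z < ρ → y ∈ K := by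
  obtain ⟨z, hz⟩ := Set.Nonempty.intrinsicInterior hKconv hKne
  rw [intrinsicInterior] at hz
  obtain ⟨z', hz', hz'eq⟩ := hz
  rw [mem_interior_iff_mem_nhds, Metric.mem_nhds_iff] at hz'
  obtain ⟨ρ, hρ, hball⟩ := hz'
  refine ⟨z, ρ, hρ, ?_, ?_⟩
  · have : z' ∈ ((↑) ⁻¹' K : Set (affineSpan ℝ K)) := by
      apply hball
      exact mem_ball_self hρ
    rw [← hz'eq]
    exact this
  · intro y hy hdist
    have hyb : (⟨y, hy⟩ : affineSpan ℝ K) ∈ ball z' ρ := by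
      rw [mem_ball, Subtype.dist_eq, hz'eq]
      exact hdist
    exact hball hyb

lemma far_aux (v u₀ : E) (hv : ‖v‖ = 1) (hvu₀ : ⟪v, u₀⟫_ℝ = 0) (p : E) (N : Set E)
    (d' R : ℝ) (hd' : 0 < d') (hR : 0 ≤ R)
    (hsep : ∀ q ∈ N, d' ≤ |⟪v, p - q⟫_ℝ|) (hbnd : ∀ q ∈ N, ‖p - q‖ ≤ R) :
    ∀ u : E, ‖u‖ = 1 → ‖u - u₀‖ < d'/(2*(R+1)) → ∀ q ∈ N,
      d'/2 ≤ dist (projHyperplane u p) (projHyperplane u q) := by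
  intro u hu hur q hq
  rw [dist_eq_norm, projH_sub _ _ _ hu]
  have h1 : |⟪v, projHyperplane u (p - q)⟫_ℝ| ≤ ‖projHyperplane u (p - q)‖ := by
    have := abs_real_inner_le_norm v (projHyperplane u (p - q))
    rwa [hv, one_mul] at this
  have h2 : ⟪v, projHyperplane u (p - q)⟫_ℝ = ⟪v, p - q⟫_ℝ - ⟪u, p - q⟫_ℝ * ⟪v, u⟫_ℝ := by
    rw [projH_eq _ _ hu, inner_sub_right, inner_smul_right]
  have h3 : |⟪v, u⟫_ℝ| < d'/(2*(R+1)) := by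
    have he : ⟪v, u⟫_ℝ = ⟪v, u - u₀⟫_ℝ := by rw [inner_sub_right, hvu₀, sub_zero]
    rw [he]
    have := abs_real_inner_le_norm v (u - u₀)
    rw [hv, one_mul] at this
    linarith
  have h4 : |⟪u, p - q⟫_ℝ| ≤ R := by
    have := abs_real_inner_le_norm u (p - q)
    rw [hu, one_mul] at this
    exact le_trans this (hbnd q hq)
  have h5 : |⟪u, p - q⟫_ℝ * ⟪v, u⟫_ℝ| ≤ d'/2 := by
    rw [abs_mul]
    have hc : |⟪u, p - q⟫_ℝ| * |⟪v, u⟫_ℝ| ≤ R * (d'/(2*(R+1))) := by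
      apply mul_le_mul h4 h3.le (abs_nonneg _) hR
    apply le_trans hc
    rw [mul_div_assoc', div_le_div_iff₀ (by positivity) (by norm_num : (0:ℝ) < 2)]
    nlinarith
  have h6 := hsep q hq
  have h7 := abs_sub_abs_le_abs_sub (⟪v, p - q⟫_ℝ) (⟪u, p - q⟫_ℝ * ⟪v, u⟫_ℝ)
  rw [← h2] at h7
  linarith

lemma far_tilt (v e : E) (hv : ‖v‖ = 1) (he : ‖e‖ = 1) (hve : ⟪v, e⟫_ℝ = 0)
    (p : E) (N : Set E) (Δ R β₀ : ℝ) (hΔ : 0 < Δ) (hR : 0 ≤ R)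
    (hsep : ∀ q ∈ N, ⟪v, p - q⟫_ℝ = Δ) (hbnd : ∀ q ∈ N, ‖p - q‖ ≤ R)
    (hβ₀1 : β₀ ≤ 1/2) (hβ₀2 : β₀ * (8*Δ + 16*R + 1) ≤ Δ) (hβ₀pos : 0 < β₀) :
    ∀ u : E, ‖u‖ = 1 → ‖u - (β₀ • v + Real.sqrt (1 - β₀^2) • e)‖ < β₀ → ∀ q ∈ N,
      Δ/2 ≤ dist (projHyperplane u p) (projHyperplane u q) := by
  intro u hu hur q hq
  set u₀ := β₀ • v + Real.sqrt (1 - β₀^2) • e with hu₀def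
  have hvu₀ : ⟪v, u₀⟫_ℝ = β₀ := by
    rw [hu₀def, inner_add_right, inner_smul_right, inner_smul_right, real_inner_self_eq_norm_sq,
      hv, hve]
    ring
  rw [dist_eq_norm, projH_sub _ _ _ hu]
  have h1 : |⟪v, projHyperplane u (p - q)⟫_ℝ| ≤ ‖projHyperplane u (p - q)‖ := by
    have := abs_real_inner_le_norm v (projHyperplane u (p - q))
    rwa [hv, one_mul] at this
  have h2 : ⟪v, projHyperplane u (p - q)⟫_ℝ = ⟪v, p - q⟫_ℝ - ⟪u, p - q⟫_ℝ * ⟪v, u⟫_ℝ := by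
    rw [projH_eq _ _ hu, inner_sub_right, inner_smul_right]
  have h3 : |⟪v, u⟫_ℝ| ≤ 2*β₀ := by
    have he1 : ⟪v, u⟫_ℝ = β₀ + ⟪v, u - u₀⟫_ℝ := by
      rw [inner_sub_right, hvu₀]; ring
    have h4 := abs_real_inner_le_norm v (u - u₀)
    rw [hv, one_mul] at h4
    rw [he1]
    have := abs_add_le β₀ (⟪v, u - u₀⟫_ℝ)
    have hb : |β₀| = β₀ := abs_of_pos hβ₀pos
    linarith
  have h4 : |⟪u, p - q⟫_ℝ| ≤ R := by
    have := abs_real_inner_le_norm u (p - q)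
    rw [hu, one_mul] at this
    exact le_trans this (hbnd q hq)
  have h5 : |⟪u, p - q⟫_ℝ * ⟪v, u⟫_ℝ| ≤ Δ/2 := by
    rw [abs_mul]
    have hc : |⟪u, p - q⟫_ℝ| * |⟪v, u⟫_ℝ| ≤ R * (2*β₀) :=
      mul_le_mul h4 h3 (abs_nonneg _) hR
    apply le_trans hc
    nlinarith
  have h6 := hsep q hq
  have h7 := abs_sub_abs_le_abs_sub (⟪v, p - q⟫_ℝ) (⟪u, p - q⟫_ℝ * ⟪v, u⟫_ℝ)
  rw [← h2] at h7
  rw [h6] at h7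
  rw [abs_of_pos hΔ] at h7
  linarith

set_option maxHeartbeats 2000000 in
lemma one_sided (hn : 2 ≤ n) (K L : Set (EuclideanSpace ℝ (Fin n)))
    (hKc : IsCompact K) (hKconv : Convex ℝ K) (hLc : IsCompact L) (hLconv : Convex ℝ L)
    (hKdim : n - 1 ≤ finrank ℝ (affineSpan ℝ K).direction)
    (hLdim : n - 1 ≤ finrank ℝ (affineSpan ℝ L).direction)
    (x : EuclideanSpace ℝ (Fin n)) (hxK : x ∈ K) (hxL : x ∉ L) :
    0 < ∫⁻ u, μH[(n:ℝ) - 1] (symmDiff (projHyperplane u '' K) (projHyperplane u '' L))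
        ∂(sphereMeasure n) := by
  have hn1 : 1 ≤ n := by omega
  have hLne : L.Nonempty := nonempty_of_dim hn L hLdim
  obtain ⟨v, d', hv, hd', hsepL⟩ := exists_sep L hLc hLconv hLne x hxL
  have hvne : v ≠ 0 := by intro h; rw [h, norm_zero] at hv; norm_num at hv
  obtain ⟨e, he, hve⟩ := exists_unit_orth hn v hvne
  obtain ⟨R₀, hR₀⟩ := (hKc.union hLc).isBounded.exists_norm_le
  set R := 2*R₀ with hRdef
  have hR0 : 0 ≤ R₀ := le_trans (norm_nonneg x) (hR₀ x (Set.mem_union_left _ hxK))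
  have hR : 0 ≤ R := by rw [hRdef]; linarith
  have hbnd : ∀ p ∈ K ∪ L, ∀ q ∈ K ∪ L, ‖p - q‖ ≤ R := by
    intro p hp q hq
    calc ‖p - q‖ ≤ ‖p‖ + ‖q‖ := norm_sub_le _ _
      _ ≤ R₀ + R₀ := add_le_add (hR₀ p hp) (hR₀ q hq)
      _ = R := by rw [hRdef]; ring
  have hbndxL : ∀ q ∈ L, ‖x - q‖ ≤ R := fun q hq =>
    hbnd x (Set.mem_union_left _ hxK) q (Set.mem_union_right _ hq)
  have hsepxL : ∀ q ∈ L, d' ≤ |⟪v, x - q⟫_ℝ| := by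
    intro q hq
    have h1 := hsepL q hq
    have h2 : d' ≤ ⟪v, x - q⟫_ℝ := by rw [inner_sub_right]; linarith
    exact le_trans h2 (le_abs_self _)
  have hq1 : 0 < d'/(2*(R+1)) := by positivity
  have hflip : (∫⁻ u, μH[(n:ℝ)-1] (symmDiff (projHyperplane u '' L) (projHyperplane u '' K))
        ∂(sphereMeasure n))
      = ∫⁻ u, μH[(n:ℝ)-1] (symmDiff (projHyperplane u '' K) (projHyperplane u '' L))
        ∂(sphereMeasure n) :=
    lintegral_congr (fun u => by rw [symmDiff_comm])
  have hKle : finrank ℝ (affineSpan ℝ K).direction ≤ n := by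
    have h := Submodule.finrank_le (affineSpan ℝ K).direction
    rwa [finrank_euclideanSpace_fin] at h
  have hLle : finrank ℝ (affineSpan ℝ L).direction ≤ n := by
    have h := Submodule.finrank_le (affineSpan ℝ L).direction
    rwa [finrank_euclideanSpace_fin] at h
  rcases (by omega : finrank ℝ (affineSpan ℝ K).direction = n ∨
      finrank ℝ (affineSpan ℝ K).direction = n - 1) with hdK | hdK
  · -- K has full dimension
    obtain ⟨z, ρ, hρ, hball⟩ := full_interior K hKconv ⟨x, hxK⟩ hdK
    refine main_aux hn K L hKconv e e he he (1/2) ρ (d'/2) (d'/(2*(R+1)))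
      (by norm_num) hρ (by linarith) hq1 ?_ x z hxK ?_ ?_
    · rw [real_inner_self_eq_norm_sq, he]; norm_num
    · intro a _ ha
      apply hball
      rw [mem_ball, dist_eq_norm, add_sub_cancel_left]
      exact ha
    · exact far_aux v e hv hve x L d' R hd' hR hsepxL hbndxL
  · -- K is a flat of dimension n-1
    obtain ⟨wK, hwK, hKdir⟩ := flat_normal hn1 K hdK
    obtain ⟨z, ρ, hρ, hzK, hrel⟩ := rel_ball K hKconv ⟨x, hxK⟩
    have hsliceK : ∀ a : E, ⟪wK, a⟫_ℝ = 0 → ‖a‖ < ρ → z + a ∈ K := by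
      intro a haw ha
      have hadir : a ∈ (affineSpan ℝ K).direction := by
        rw [hKdir]
        exact Submodule.mem_orthogonal_singleton_iff_inner_right.mpr haw
      have hmem : z + a ∈ affineSpan ℝ K := by
        have h := AffineSubspace.vadd_mem_of_mem_direction hadir (subset_affineSpan ℝ K hzK)
        rwa [vadd_eq_add, add_comm] at h
      apply hrel (z + a) hmem
      rw [dist_eq_norm, add_sub_cancel_left]
      exact ha
    by_cases hgood : ∃ e' : E, ‖e'‖ = 1 ∧ ⟪v, e'⟫_ℝ = 0 ∧ ⟪wK, e'⟫_ℝ ≠ 0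
    · obtain ⟨e', he', hve', hwe'⟩ := hgood
      refine main_aux hn K L hKconv e' wK he' hwK (|⟪wK, e'⟫_ℝ|/2) ρ (d'/2) (d'/(2*(R+1)))
        (by positivity) hρ (by linarith) hq1 (by rw [mul_div_cancel₀]; norm_num)
        x z hxK hsliceK ?_
      exact far_aux v e' hv hve' x L d' R hd' hR hsepxL hbndxL
    · push_neg at hgood
      have hmemv : wK ∈ ℝ ∙ v := by
        rw [← Submodule.orthogonal_orthogonal (ℝ ∙ v), Submodule.mem_orthogonal]
        intro a ha
        rcases eq_or_ne a 0 with rfl | hane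
        · exact inner_zero_left _
        · have hna : 0 < ‖a‖ := norm_pos_iff.mpr hane
          have hea : ‖‖a‖⁻¹ • a‖ = 1 := by
            rw [norm_smul, Real.norm_eq_abs, abs_of_pos (inv_pos.mpr hna),
              inv_mul_cancel₀ hna.ne']
          have hva : ⟪v, a⟫_ℝ = 0 := Submodule.mem_orthogonal_singleton_iff_inner_right.mp ha
          have hvea : ⟪v, ‖a‖⁻¹ • a⟫_ℝ = 0 := by rw [inner_smul_right, hva, mul_zero]
          have h0 := hgood (‖a‖⁻¹ • a) hea hvea
          rw [inner_smul_right] at h0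
          have hzero : ⟪wK, a⟫_ℝ = 0 := by
            rcases mul_eq_zero.mp h0 with h | h
            · exact absurd h (by positivity)
            · exact h
          rw [real_inner_comm]
          exact hzero
      obtain ⟨cK, hcK⟩ := Submodule.mem_span_singleton.mp hmemv
      have hwKne : wK ≠ 0 := by intro h; rw [h, norm_zero] at hwK; norm_num at hwK
      have hcKne : cK ≠ 0 := by
        intro h
        rw [h, zero_smul] at hcK
        exact hwKne hcK.symm
      have hKv : ∀ p' ∈ K, ⟪v, p'⟫_ℝ = ⟪v, z⟫_ℝ := by
        intro p' hp'
        have hdirm : p' - z ∈ (affineSpan ℝ K).direction := by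
          have h := AffineSubspace.vsub_mem_direction (subset_affineSpan ℝ K hp')
            (subset_affineSpan ℝ K hzK)
          rwa [vsub_eq_sub] at h
        rw [hKdir] at hdirm
        have h0 : ⟪wK, p' - z⟫_ℝ = 0 :=
          Submodule.mem_orthogonal_singleton_iff_inner_right.mp hdirm
        rw [← hcK, real_inner_smul_left] at h0
        have h1 : ⟪v, p' - z⟫_ℝ = 0 := by
          rcases mul_eq_zero.mp h0 with h | h
          · exact absurd h hcKne
          · exact h
        rw [inner_sub_right] at h1
        linarith
      have hxz : ⟪v, x⟫_ℝ = ⟪v, z⟫_ℝ := hKv x hxK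
      have hsepK : ∀ zL ∈ L, ∀ q ∈ K, d' ≤ |⟪v, zL - q⟫_ℝ| := by
        intro zL hzL q hq
        have h1 := hsepL zL hzL
        have h2 := hKv q hq
        have h3 : ⟪v, zL - q⟫_ℝ ≤ -d' := by
          rw [inner_sub_right, h2, ← hxz]
          linarith
        have h4 := neg_le_abs (⟪v, zL - q⟫_ℝ)
        linarith
      have hbndLK : ∀ zL ∈ L, ∀ q ∈ K, ‖zL - q‖ ≤ R := fun zL hzL q hq =>
        hbnd zL (Set.mem_union_right _ hzL) q (Set.mem_union_left _ hq)
      rcases (by omega : finrank ℝ (affineSpan ℝ L).direction = n ∨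
          finrank ℝ (affineSpan ℝ L).direction = n - 1) with hdL | hdL
      · -- L full dimensional
        obtain ⟨zL, ρL, hρL, hballL⟩ := full_interior L hLconv hLne hdL
        have hzLL : zL ∈ L := hballL (mem_ball_self hρL)
        rw [← hflip]
        refine main_aux hn L K hLconv e e he he (1/2) ρL (d'/2) (d'/(2*(R+1)))
          (by norm_num) hρL (by linarith) hq1 ?_ zL zL hzLL ?_ ?_
        · rw [real_inner_self_eq_norm_sq, he]; norm_num
        · intro a _ ha
          apply hballL
          rw [mem_ball, dist_eq_norm, add_sub_cancel_left]
          exact ha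
        · exact far_aux v e hv hve zL K d' R hd' hR (hsepK zL hzLL) (hbndLK zL hzLL)
      · -- L is a flat of dimension n-1
        obtain ⟨wL, hwL, hLdir⟩ := flat_normal hn1 L hdL
        obtain ⟨zL, ρL, hρL, hzLL, hrelL⟩ := rel_ball L hLconv hLne
        have hsliceL : ∀ a : E, ⟪wL, a⟫_ℝ = 0 → ‖a‖ < ρL → zL + a ∈ L := by
          intro a haw ha
          have hadir : a ∈ (affineSpan ℝ L).direction := by
            rw [hLdir]
            exact Submodule.mem_orthogonal_singleton_iff_inner_right.mpr haw
          have hmem : zL + a ∈ affineSpan ℝ L := by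
            have h := AffineSubspace.vadd_mem_of_mem_direction hadir (subset_affineSpan ℝ L hzLL)
            rwa [vadd_eq_add, add_comm] at h
          apply hrelL (zL + a) hmem
          rw [dist_eq_norm, add_sub_cancel_left]
          exact ha
        by_cases hgoodL : ∃ e' : E, ‖e'‖ = 1 ∧ ⟪v, e'⟫_ℝ = 0 ∧ ⟪wL, e'⟫_ℝ ≠ 0
        · obtain ⟨e', he', hve', hwe'⟩ := hgoodL
          rw [← hflip]
          refine main_aux hn L K hLconv e' wL he' hwL (|⟪wL, e'⟫_ℝ|/2) ρL (d'/2)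
            (d'/(2*(R+1))) (by positivity) hρL (by linarith) hq1
            (by rw [mul_div_cancel₀]; norm_num) zL zL hzLL hsliceL ?_
          exact far_aux v e' hv hve' zL K d' R hd' hR (hsepK zL hzLL) (hbndLK zL hzLL)
        · push_neg at hgoodL
          have hmemvL : wL ∈ ℝ ∙ v := by
            rw [← Submodule.orthogonal_orthogonal (ℝ ∙ v), Submodule.mem_orthogonal]
            intro a ha
            rcases eq_or_ne a 0 with rfl | hane
            · exact inner_zero_left _
            · have hna : 0 < ‖a‖ := norm_pos_iff.mpr hane
              have hea : ‖‖a‖⁻¹ • a‖ = 1 := by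
                rw [norm_smul, Real.norm_eq_abs, abs_of_pos (inv_pos.mpr hna),
                  inv_mul_cancel₀ hna.ne']
              have hva : ⟪v, a⟫_ℝ = 0 := Submodule.mem_orthogonal_singleton_iff_inner_right.mp ha
              have hvea : ⟪v, ‖a‖⁻¹ • a⟫_ℝ = 0 := by rw [inner_smul_right, hva, mul_zero]
              have h0 := hgoodL (‖a‖⁻¹ • a) hea hvea
              rw [inner_smul_right] at h0
              have hzero : ⟪wL, a⟫_ℝ = 0 := by
                rcases mul_eq_zero.mp h0 with h | h
                · exact absurd h (by positivity)
                · exact h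
              rw [real_inner_comm]
              exact hzero
          obtain ⟨cL, hcL⟩ := Submodule.mem_span_singleton.mp hmemvL
          have hwLne : wL ≠ 0 := by intro h; rw [h, norm_zero] at hwL; norm_num at hwL
          have hcLne : cL ≠ 0 := by
            intro h
            rw [h, zero_smul] at hcL
            exact hwLne hcL.symm
          have hLv : ∀ q ∈ L, ⟪v, q⟫_ℝ = ⟪v, zL⟫_ℝ := by
            intro q hq
            have hdirm : q - zL ∈ (affineSpan ℝ L).direction := by
              have h := AffineSubspace.vsub_mem_direction (subset_affineSpan ℝ L hq)
                (subset_affineSpan ℝ L hzLL)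
              rwa [vsub_eq_sub] at h
            rw [hLdir] at hdirm
            have h0 : ⟪wL, q - zL⟫_ℝ = 0 :=
              Submodule.mem_orthogonal_singleton_iff_inner_right.mp hdirm
            rw [← hcL, real_inner_smul_left] at h0
            have h1 : ⟪v, q - zL⟫_ℝ = 0 := by
              rcases mul_eq_zero.mp h0 with h | h
              · exact absurd h hcLne
              · exact h
            rw [inner_sub_right] at h1
            linarith
          set Δ := ⟪v, x⟫_ℝ - ⟪v, zL⟫_ℝ with hΔdef
          have hΔd : d' ≤ Δ := by
            have h1 := hsepL zL hzLL
            rw [hΔdef]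
            linarith
          have hΔ : 0 < Δ := lt_of_lt_of_le hd' hΔd
          have hden2 : (0:ℝ) < 8*Δ + 16*R + 1 := by positivity
          set β₀ := min (1/2) (Δ/(8*Δ+16*R+1)) with hβ₀def
          have hβ₀pos : 0 < β₀ := lt_min (by norm_num) (by positivity)
          have hβ₀1 : β₀ ≤ 1/2 := min_le_left _ _
          have hβ₀2 : β₀ * (8*Δ + 16*R + 1) ≤ Δ := by
            have h1 : β₀ ≤ Δ/(8*Δ+16*R+1) := min_le_right _ _
            rw [← le_div_iff₀ hden2]
            exact h1
          have hβ₀sq : (0:ℝ) ≤ 1 - β₀^2 := by nlinarith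
          set u₀ := β₀ • v + Real.sqrt (1 - β₀^2) • e with hu₀def
          have hu₀ : ‖u₀‖ = 1 := by
            have hgτ : Real.sqrt (1 - β₀^2)^2 = 1 - β₀^2 := Real.sq_sqrt hβ₀sq
            have hcross : ⟪β₀ • v, Real.sqrt (1 - β₀^2) • e⟫_ℝ = 0 := by
              rw [inner_smul_left, inner_smul_right, hve]
              simp
            have hsq : ‖u₀‖^2 = 1 := by
              rw [hu₀def, norm_add_sq_real, hcross, norm_smul, norm_smul, Real.norm_eq_abs,
                Real.norm_eq_abs, hv, he, mul_one, mul_one, sq_abs, sq_abs, hgτ]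
              ring
            have h1 : (‖u₀‖ - 1) * (‖u₀‖ + 1) = 0 := by nlinarith
            rcases mul_eq_zero.mp h1 with h | h
            · linarith
            · nlinarith [norm_nonneg u₀]
          have hvu₀ : ⟪v, u₀⟫_ℝ = β₀ := by
            rw [hu₀def, inner_add_right, inner_smul_right, inner_smul_right,
              real_inner_self_eq_norm_sq, hv, hve]
            ring
          have hsepΔ : ∀ q ∈ L, ⟪v, x - q⟫_ℝ = Δ := by
            intro q hq
            rw [inner_sub_right, hLv q hq, hΔdef]
          have hsliceKv : ∀ a : E, ⟪v, a⟫_ℝ = 0 → ‖a‖ < ρ → z + a ∈ K := by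
            intro a hva ha
            apply hsliceK a _ ha
            rw [← hcK, real_inner_smul_left, hva, mul_zero]
          refine main_aux hn K L hKconv u₀ v hu₀ hv (β₀/2) ρ (Δ/2) β₀
            (by positivity) hρ (by positivity) hβ₀pos ?_ x z hxK hsliceKv ?_
          · rw [hvu₀, abs_of_pos hβ₀pos]
            linarith
          · exact far_tilt v e hv he hve x L Δ R β₀ hΔ hR hsepΔ hbndxL hβ₀1 hβ₀2 hβ₀pos

/-- Positive definiteness of the intrinsic volume metric `δ_{n−1}`:
if `K`, `L` are compact convex sets of dimension at least `n−1` in `ℝⁿ` and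
`∫_{S^{n−1}} vol_{n−1}((K|u^⊥) △ (L|u^⊥)) dσ(u) = 0`, then `K = L`. -/
theorem intrinsic_metric_codim_one_positive_definite
    (n : ℕ) (hn : 2 ≤ n) (K L : Set (EuclideanSpace ℝ (Fin n)))
    (hKc : IsCompact K) (hKconv : Convex ℝ K)
    (hLc : IsCompact L) (hLconv : Convex ℝ L)
    (hKdim : n - 1 ≤ Module.finrank ℝ (affineSpan ℝ K).direction)
    (hLdim : n - 1 ≤ Module.finrank ℝ (affineSpan ℝ L).direction)
    (h : (∫⁻ u, μH[(n : ℝ) - 1]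
        (symmDiff (projHyperplane u '' K) (projHyperplane u '' L)) ∂(sphereMeasure n)) = 0) :
    K = L := by
  have h1 : K ⊆ L := by
    by_contra hns
    obtain ⟨x, hxK, hxL⟩ := Set.not_subset.mp hns
    have hpos := one_sided hn K L hKc hKconv hLc hLconv hKdim hLdim x hxK hxL
    rw [h] at hpos
    exact lt_irrefl _ hpos
  have h2 : L ⊆ K := by
    by_contra hns
    obtain ⟨x, hxL, hxK⟩ := Set.not_subset.mp hns
    have hpos := one_sided hn L K hLc hLconv hKc hKconv hLdim hKdim x hxL hxK
    have hflip : (∫⁻ u, μH[(n:ℝ) - 1]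
          (symmDiff (projHyperplane u '' L) (projHyperplane u '' K)) ∂(sphereMeasure n))
        = ∫⁻ u, μH[(n:ℝ) - 1]
          (symmDiff (projHyperplane u '' K) (projHyperplane u '' L)) ∂(sphereMeasure n) :=
      lintegral_congr (fun u => by rw [symmDiff_comm])
    rw [hflip, h] at hpos
    exact lt_irrefl _ hpos
  exact Set.Subset.antisymm h1 h2
end

section
/- Let K and L be nonempty compact convex subsets of ℝⁿ with K ∩ L ≠ ∅, and let u ∈ S^{n−1}. Then 𝓗¹((K|ℓ_u) △ (L|ℓ_u)) = |h_K(u) − h_L(u)| + |h_K(−u) − h_L(−u)|, where ℓ_u = span{u} and K|ℓ_u, L|ℓ_u are the orthogonal projections of K and L onto the line ℓ_u. -/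
open MeasureTheory Metric

/-- Orthogonal projection of `x` onto the line `ℓ_u = span{u}`, viewed in the ambient space. -/
noncomputable def projLine {n : ℕ} (u x : EuclideanSpace ℝ (Fin n)) :
    EuclideanSpace ℝ (Fin n) :=
  (Submodule.orthogonalProjectionOnto (ℝ ∙ u) x : EuclideanSpace ℝ (Fin n))

/-- The support function `h_K(u) = sup_{x ∈ K} ⟨x, u⟩` of a set `K ⊆ ℝⁿ`. -/
noncomputable def suppFn {n : ℕ} (K : Set (EuclideanSpace ℝ (Fin n)))
    (u : EuclideanSpace ℝ (Fin n)) : ℝ :=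
  sSup ((fun x => (inner ℝ x u : ℝ)) '' K)

section Aux
open Set
variable {n : ℕ}


-- image of a compact convex nonempty set under inner with u
lemma image_inner_eq_Icc {K : Set (EuclideanSpace ℝ (Fin n))}
    (hKc : IsCompact K) (hKconv : Convex ℝ K) (hKne : K.Nonempty)
    (u : EuclideanSpace ℝ (Fin n)) :
    (fun x => (inner ℝ x u : ℝ)) '' K =
      Icc (- sSup ((fun x => (inner ℝ x (-u) : ℝ)) '' K)) (sSup ((fun x => (inner ℝ x u : ℝ)) '' K)) := by
  set f : EuclideanSpace ℝ (Fin n) → ℝ := fun x => (inner ℝ x u : ℝ) with hf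
  have hcont : Continuous f := by
    simpa [hf] using (continuous_id.inner continuous_const : Continuous fun x : EuclideanSpace ℝ (Fin n) => (inner ℝ x u : ℝ))
  have hcompact : IsCompact (f '' K) := hKc.image hcont
  have hconv : Convex ℝ (f '' K) := by
    have h1 : Convex ℝ ((innerSL ℝ u).toLinearMap '' K) := hKconv.linear_image _
    have h2 : (innerSL ℝ u).toLinearMap '' K = f '' K := by
      apply Set.image_congr'
      intro x
      simp only [hf, LinearMap.coe_coe, innerSL_apply_apply]
      exact real_inner_comm x u
    rwa [h2] at h1
  have hconn : IsConnected (f '' K) := ⟨hKne.image f, hconv.isPreconnected⟩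
  have hIcc := eq_Icc_of_connected_compact hconn hcompact
  have hneg : (fun x => (inner ℝ x (-u) : ℝ)) '' K = Neg.neg '' (f '' K) := by
    rw [Set.image_image]
    ext t; simp [hf, inner_neg_right]
  have hsup : sSup ((fun x => (inner ℝ x (-u) : ℝ)) '' K) = - sInf (f '' K) := by
    have hab : sInf (f '' K) ≤ sSup (f '' K) := by
      have := hIcc ▸ (hKne.image f)
      exact nonempty_Icc.mp this
    rw [hneg]
    conv_lhs => rw [hIcc]
    rw [Set.image_neg_Icc, csSup_Icc (by linarith)]
  rw [hsup, neg_neg]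
  exact hIcc

lemma volume_symmDiff_Icc {a b c d : ℝ} (hab : a ≤ b) (hcd : c ≤ d)
    (hover : max a c ≤ min b d) :
    volume (symmDiff (Icc a b) (Icc c d)) = ENNReal.ofReal (|a - c| + |b - d|) := by
  have hint : Icc a b ∩ Icc c d = Icc (max a c) (min b d) := Set.Icc_inter_Icc
  have h1 : volume (Icc a b \ Icc c d) = ENNReal.ofReal (b - a - (min b d - max a c)) := by
    have : Icc a b \ Icc c d = Icc a b \ (Icc a b ∩ Icc c d) := by rw [Set.diff_self_inter]
    rw [this, measure_diff Set.inter_subset_left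
      ((measurableSet_Icc.inter measurableSet_Icc).nullMeasurableSet)
      (by rw [hint]; exact (measure_Icc_lt_top).ne), hint, Real.volume_Icc, Real.volume_Icc,
      ← ENNReal.ofReal_sub _ (by linarith)]
  have h2 : volume (Icc c d \ Icc a b) = ENNReal.ofReal (d - c - (min b d - max a c)) := by
    have : Icc c d \ Icc a b = Icc c d \ (Icc c d ∩ Icc a b) := by rw [Set.diff_self_inter]
    rw [this, Set.inter_comm, measure_diff (Set.inter_subset_right)
      ((measurableSet_Icc.inter measurableSet_Icc).nullMeasurableSet)
      (by rw [hint]; exact (measure_Icc_lt_top).ne), hint, Real.volume_Icc, Real.volume_Icc,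
      ← ENNReal.ofReal_sub _ (by linarith)]
  rw [Set.symmDiff_def, measure_union (disjoint_sdiff_sdiff)
    (measurableSet_Icc.diff measurableSet_Icc), h1, h2,
    ← ENNReal.ofReal_add (by linarith [le_max_left a c, min_le_left b d]) (by linarith [le_max_right a c, min_le_right b d])]
  congr 1
  rcases le_total b d with h3|h3 <;> rcases le_total a c with h4|h4 <;>
    simp [min_eq_left, min_eq_right, max_eq_left, max_eq_right, abs_of_nonneg, abs_of_nonpos, *] <;>
    linarith

theorem main_aux_s6
    (n : ℕ) (K L : Set (EuclideanSpace ℝ (Fin n)))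
    (hKc : IsCompact K) (hKconv : Convex ℝ K) (hKne : K.Nonempty)
    (hLc : IsCompact L) (hLconv : Convex ℝ L) (hLne : L.Nonempty)
    (hKL : (K ∩ L).Nonempty)
    (u : EuclideanSpace ℝ (Fin n)) (hu : u ∈ sphere (0 : EuclideanSpace ℝ (Fin n)) 1) :
    μH[1] (symmDiff ((fun x => (Submodule.orthogonalProjectionOnto (ℝ ∙ u) x : EuclideanSpace ℝ (Fin n))) '' K)
        ((fun x => (Submodule.orthogonalProjectionOnto (ℝ ∙ u) x : EuclideanSpace ℝ (Fin n))) '' L)) =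
      ENNReal.ofReal (|sSup ((fun x => (inner ℝ x u : ℝ)) '' K) - sSup ((fun x => (inner ℝ x u : ℝ)) '' L)| +
        |sSup ((fun x => (inner ℝ x (-u) : ℝ)) '' K) - sSup ((fun x => (inner ℝ x (-u) : ℝ)) '' L)|) := by
  have hnorm : ‖u‖ = 1 := by simpa using mem_sphere_zero_iff_norm.mp hu
  set g : ℝ → EuclideanSpace ℝ (Fin n) := fun t => t • u with hg
  have hproj : ∀ x, (Submodule.orthogonalProjectionOnto (ℝ ∙ u) x : EuclideanSpace ℝ (Fin n)) = g ((inner ℝ x u : ℝ)) := by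
    intro x
    rw [← Submodule.starProjection_apply, Submodule.starProjection_singleton, hnorm, real_inner_comm u x]
    norm_num [hg]
  have himg : ∀ S : Set (EuclideanSpace ℝ (Fin n)),
      (fun x => (Submodule.orthogonalProjectionOnto (ℝ ∙ u) x : EuclideanSpace ℝ (Fin n))) '' S
        = g '' ((fun x => (inner ℝ x u : ℝ)) '' S) := by
    intro S
    rw [Set.image_image]
    apply Set.image_congr'
    intro x
    exact hproj x
  have hiso : Isometry g := by
    apply Isometry.of_dist_eq
    intro s t
    rw [hg]
    simp only [dist_eq_norm, ← sub_smul, norm_smul, hnorm, Real.norm_eq_abs, mul_one, Real.dist_eq]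
  set aK := - sSup ((fun x => (inner ℝ x (-u) : ℝ)) '' K) with haK
  set bK := sSup ((fun x => (inner ℝ x u : ℝ)) '' K) with hbK
  set aL := - sSup ((fun x => (inner ℝ x (-u) : ℝ)) '' L) with haL
  set bL := sSup ((fun x => (inner ℝ x u : ℝ)) '' L) with hbL
  have hKicc : (fun x => (inner ℝ x u : ℝ)) '' K = Icc aK bK := image_inner_eq_Icc hKc hKconv hKne u
  have hLicc : (fun x => (inner ℝ x u : ℝ)) '' L = Icc aL bL := image_inner_eq_Icc hLc hLconv hLne u
  obtain ⟨z, hzK, hzL⟩ := hKL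
  have htK : (inner ℝ z u : ℝ) ∈ Icc aK bK := hKicc ▸ Set.mem_image_of_mem _ hzK
  have htL : (inner ℝ z u : ℝ) ∈ Icc aL bL := hLicc ▸ Set.mem_image_of_mem _ hzL
  rw [Set.mem_Icc] at htK htL
  have hover : max aK aL ≤ min bK bL := by
    simp only [max_le_iff, le_min_iff]
    constructor <;> constructor <;> linarith [htK.1, htK.2, htL.1, htL.2]
  rw [himg K, himg L, ← Set.image_symmDiff hiso.injective,
    hiso.hausdorffMeasure_image (Or.inl zero_le_one), hKicc, hLicc,
    MeasureTheory.hausdorffMeasure_real,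
    volume_symmDiff_Icc (htK.1.trans htK.2) (htL.1.trans htL.2) hover]
  congr 1
  have h5 : |aK - aL| = |sSup ((fun x => (inner ℝ x (-u) : ℝ)) '' K)
      - sSup ((fun x => (inner ℝ x (-u) : ℝ)) '' L)| := by
    rw [haK, haL, neg_sub_neg, abs_sub_comm]
  rw [h5, add_comm]

end Aux

/-- If `K, L ⊂ ℝⁿ` are nonempty compact convex sets with `K ∩ L ≠ ∅` and
`u ∈ S^{n−1}`, then `𝓗¹((K|ℓ_u) △ (L|ℓ_u)) = |h_K(u) − h_L(u)| + |h_K(−u) − h_L(−u)|`. -/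
theorem hausdorff_symmDiff_line_projection_eq_support_diff
    (n : ℕ) (K L : Set (EuclideanSpace ℝ (Fin n)))
    (hKc : IsCompact K) (hKconv : Convex ℝ K) (hKne : K.Nonempty)
    (hLc : IsCompact L) (hLconv : Convex ℝ L) (hLne : L.Nonempty)
    (hKL : (K ∩ L).Nonempty)
    (u : EuclideanSpace ℝ (Fin n)) (hu : u ∈ sphere (0 : EuclideanSpace ℝ (Fin n)) 1) :
    μH[1] (symmDiff (projLine u '' K) (projLine u '' L)) =
      ENNReal.ofReal (|suppFn K u - suppFn L u| + |suppFn K (-u) - suppFn L (-u)|) := by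
  exact main_aux_s6 n K L hKc hKconv hKne hLc hLconv hLne hKL u hu
end
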